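/- Let H₁, H₂, H₃ be complex Hilbert spaces and A ∈ B(H₁), B ∈ B(H₂,H₁), C ∈ B(H₂), D ∈ B(H₃,H₂), E ∈ B(H₃). Suppose that the 2×2 operator matrices [[A, B],[B*, C]] (on H₁ ⊕ H₂) and [[C, D],[D*, E]] (on H₂ ⊕ H₃) are positive definite. For X ∈ B(H₃,H₁) let M(X) be the 3×3 operator matrix [[A, B, X],[B*, C, D],[X*, D*, E]] on H₁ ⊕ H₂ ⊕ H₃. Then there exist X for which M(X) is positive definite; in particular, for X₀ := B C⁻¹ D the operator M(X₀) is positive definite. -/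

import Mathlib

/- STATEMENT 4: the 3×3 positive definite operator matrix completion problem
   (existence part of Proposition `3x3`). -/

noncomputable section

open ContinuousLinearMap

variable {H₁ H₂ H₃ : Type*}
  [NormedAddCommGroup H₁] [InnerProductSpace ℂ H₁] [CompleteSpace H₁]
  [NormedAddCommGroup H₂] [InnerProductSpace ℂ H₂] [CompleteSpace H₂]
  [NormedAddCommGroup H₃] [InnerProductSpace ℂ H₃] [CompleteSpace H₃]

/-- Positive definiteness of the 2×2 operator matrix `[[A, B], [B*, C]]`, regarded as an
operator on the Hilbert-space direct sum `H₁ ⊕ H₂`: it is self-adjoint (equivalently, `A` and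
`C` are self-adjoint, the off-diagonal entries being automatically adjoint to each other) and
its quadratic form is bounded below by `ε` times the squared norm. -/
def Pos2 {E F : Type*} [NormedAddCommGroup E] [InnerProductSpace ℂ E] [CompleteSpace E]
    [NormedAddCommGroup F] [InnerProductSpace ℂ F] [CompleteSpace F]
    (A : E →L[ℂ] E) (B : F →L[ℂ] E) (C : F →L[ℂ] F) : Prop :=
  IsSelfAdjoint A ∧ IsSelfAdjoint C ∧
  ∃ ε : ℝ, 0 < ε ∧ ∀ (x : E) (y : F),
    ε * (‖x‖ ^ 2 + ‖y‖ ^ 2) ≤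
      (inner ℂ (A x) x : ℂ).re + 2 * (inner ℂ (B y) x : ℂ).re + (inner ℂ (C y) y : ℂ).re

/-- Positive definiteness of the 3×3 operator matrix `M(X) = [[A,B,X],[B*,C,D],[X*,D*,E]]`,
regarded as an operator on the Hilbert-space direct sum `H₁ ⊕ H₂ ⊕ H₃`. -/
def Pos3 (A : H₁ →L[ℂ] H₁) (B : H₂ →L[ℂ] H₁) (X : H₃ →L[ℂ] H₁)
    (C : H₂ →L[ℂ] H₂) (D : H₃ →L[ℂ] H₂) (E : H₃ →L[ℂ] H₃) : Prop :=
  IsSelfAdjoint A ∧ IsSelfAdjoint C ∧ IsSelfAdjoint E ∧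
  ∃ ε : ℝ, 0 < ε ∧ ∀ (x : H₁) (y : H₂) (z : H₃),
    ε * (‖x‖ ^ 2 + ‖y‖ ^ 2 + ‖z‖ ^ 2) ≤
      (inner ℂ (A x) x : ℂ).re + (inner ℂ (C y) y : ℂ).re + (inner ℂ (E z) z : ℂ).re
      + 2 * (inner ℂ (B y) x : ℂ).re + 2 * (inner ℂ (X z) x : ℂ).re + 2 * (inner ℂ (D z) y : ℂ).re

lemma cre_inner_le_norm {H : Type*} [NormedAddCommGroup H] [InnerProductSpace ℂ H]
    (a b : H) : (inner ℂ a b : ℂ).re ≤ ‖a‖ * ‖b‖ := by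
  simpa using re_inner_le_norm (𝕜 := ℂ) a b

lemma cinner_re_symm {H : Type*} [NormedAddCommGroup H] [InnerProductSpace ℂ H]
    (a b : H) : (inner ℂ a b : ℂ).re = (inner ℂ b a : ℂ).re := by
  simpa using inner_re_symm (𝕜 := ℂ) a b

lemma isUnit_of_posdef {H : Type*} [NormedAddCommGroup H] [InnerProductSpace ℂ H]
    [CompleteSpace H] (C : H →L[ℂ] H) (ε : ℝ) (hε : 0 < ε)
    (h : ∀ y, ε * ‖y‖ ^ 2 ≤ (inner ℂ (C y) y : ℂ).re) : IsUnit C := by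
  have hlow : ∀ y, ‖y‖ ≤ ((⟨ε⁻¹, inv_nonneg.mpr hε.le⟩ : NNReal) : ℝ) * ‖C y‖ := by
    intro y
    rcases eq_or_ne y 0 with rfl | hy
    · simp
    · have h1 : ε * ‖y‖ ^ 2 ≤ ‖C y‖ * ‖y‖ := (h y).trans (cre_inner_le_norm _ _)
      have hy' : 0 < ‖y‖ := norm_pos_iff.mpr hy
      have h2 : ε * ‖y‖ ≤ ‖C y‖ := by nlinarith
      show ‖y‖ ≤ ε⁻¹ * ‖C y‖
      rw [← div_eq_inv_mul, le_div_iff₀ hε]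
      linarith
  have hanti : AntilipschitzWith _ C := C.antilipschitz_of_bound hlow
  have hker : LinearMap.ker (C : H →ₗ[ℂ] H) = ⊥ := LinearMap.ker_eq_bot.mpr hanti.injective
  have hrange : LinearMap.range (C : H →ₗ[ℂ] H) = ⊤ := by
    set R := LinearMap.range (C : H →ₗ[ℂ] H) with hR
    have hclosed : IsClosed (R : Set H) := by
      have : (R : Set H) = Set.range C := by ext u; simp [hR, LinearMap.mem_range]
      rw [this]
      exact hanti.isClosed_range C.uniformContinuous
    haveI : CompleteSpace R := hclosed.completeSpace_coe
    rw [← Submodule.orthogonal_eq_bot_iff]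
    rw [Submodule.eq_bot_iff]
    intro v hv
    have hv0 : (inner ℂ (C v) v : ℂ) = 0 :=
      (Submodule.mem_orthogonal R v).mp hv (C v) (LinearMap.mem_range_self _ v)
    have := h v
    rw [hv0] at this
    have : ‖v‖ ^ 2 ≤ 0 := by
      simp at this
      nlinarith
    have : ‖v‖ = 0 := by nlinarith [norm_nonneg v, sq_nonneg ‖v‖]
    exact norm_eq_zero.mp this
  exact ⟨(ContinuousLinearEquiv.ofBijective C hker hrange).toUnit,
    ContinuousLinearEquiv.coe_ofBijective C hker hrange⟩

set_option maxHeartbeats 1000000 in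
theorem three_by_three_completion_exists
    (A : H₁ →L[ℂ] H₁) (B : H₂ →L[ℂ] H₁) (C : H₂ →L[ℂ] H₂)
    (D : H₃ →L[ℂ] H₂) (E : H₃ →L[ℂ] H₃)
    (h1 : Pos2 A B C) (h2 : Pos2 C D E) :
    (∃ X : H₃ →L[ℂ] H₁, Pos3 A B X C D E) ∧
      Pos3 A B (B ∘L Ring.inverse C ∘L D) C D E := by
  obtain ⟨hA, hC, ε₁, hε₁, H1⟩ := h1
  obtain ⟨-, hE, ε₂, hε₂, H2⟩ := h2
  have hU : IsUnit C := by
    apply isUnit_of_posdef C ε₂ hε₂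
    intro y
    have := H2 y 0
    simpa using this
  set C' := Ring.inverse C with hC'
  have hCC' : ∀ u, C (C' u) = u := by
    intro u
    have h := Ring.mul_inverse_cancel C hU
    have := DFunLike.congr_fun h u
    simpa [ContinuousLinearMap.mul_apply] using this
  suffices hmain : Pos3 A B (B ∘L Ring.inverse C ∘L D) C D E by exact ⟨⟨_, hmain⟩, hmain⟩
  refine ⟨hA, hC, hE, ?_⟩
  set K : ℝ := ‖C'‖ * ‖D‖ with hK
  have hK0 : 0 ≤ K := mul_nonneg (norm_nonneg _) (norm_nonneg _)
  refine ⟨min ε₁ ε₂ / (2 * K ^ 2 + 2), ?_, ?_⟩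
  · apply div_pos (lt_min hε₁ hε₂); nlinarith
  intro x y z
  set v : H₂ := C' (D z) with hv
  set w : H₂ := y + v with hw
  -- key inequality
  have e1 := H1 x w
  have e2 := H2 (-v) z
  have hCv : C v = D z := hCC' (D z)
  have hsym : ∀ u : H₂, (inner ℂ (C y) u : ℂ).re = (inner ℂ (C u) y : ℂ).re := by
    intro u
    rw [cinner_re_symm]
    congr 1
    exact (hC.isSymmetric u y).symm
  have hBw : B w = B y + (B ∘L Ring.inverse C ∘L D) z := by
    simp [hw, hv, ContinuousLinearMap.comp_apply, hC']
  have hCwexp : (inner ℂ (C w) w : ℂ).re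
      = (inner ℂ (C y) y : ℂ).re + 2 * (inner ℂ (D z) y : ℂ).re + (inner ℂ (D z) v : ℂ).re := by
    have expand : (inner ℂ (C w) w : ℂ) =
        inner ℂ (C y) y + inner ℂ (C y) v + inner ℂ (C v) y + inner ℂ (C v) v := by
      simp only [hw, map_add, inner_add_left, inner_add_right]
      ring
    have h1 : (inner ℂ (C y) v : ℂ).re = (inner ℂ (D z) y : ℂ).re := by
      rw [hsym v, hCv, cinner_re_symm]
    have h2 : (inner ℂ (C v) y : ℂ).re = (inner ℂ (D z) y : ℂ).re := by rw [hCv]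
    have h3 : (inner ℂ (C v) v : ℂ).re = (inner ℂ (D z) v : ℂ).re := by rw [hCv]
    rw [expand]
    simp only [Complex.add_re]
    rw [h1, h2, h3]; ring
  have hBwre : (inner ℂ (B w) x : ℂ).re
      = (inner ℂ (B y) x : ℂ).re + (inner ℂ ((B ∘L Ring.inverse C ∘L D) z) x : ℂ).re := by
    rw [hBw, inner_add_left, Complex.add_re]
  have e2' : ε₂ * ‖z‖ ^ 2 ≤ (inner ℂ (E z) z : ℂ).re - (inner ℂ (D z) v : ℂ).re := by
    have hre : (inner ℂ (C (-v)) (-v) : ℂ).re = (inner ℂ (D z) v : ℂ).re := by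
      rw [map_neg, inner_neg_neg, hCv]
    have hre2 : (inner ℂ (D z) (-v) : ℂ).re = -(inner ℂ (D z) v : ℂ).re := by
      rw [inner_neg_right]; simp
    rw [hre, hre2] at e2
    have : ε₂ * ‖z‖ ^ 2 ≤ ε₂ * (‖-v‖ ^ 2 + ‖z‖ ^ 2) := by nlinarith [sq_nonneg ‖(-v : H₂)‖]
    linarith
  rw [hCwexp, hBwre] at e1
  -- combine
  have key : ε₁ * (‖x‖ ^ 2 + ‖w‖ ^ 2) + ε₂ * ‖z‖ ^ 2 ≤
      (inner ℂ (A x) x : ℂ).re + (inner ℂ (C y) y : ℂ).re + (inner ℂ (E z) z : ℂ).re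
      + 2 * (inner ℂ (B y) x : ℂ).re + 2 * (inner ℂ ((B ∘L Ring.inverse C ∘L D) z) x : ℂ).re
      + 2 * (inner ℂ (D z) y : ℂ).re := by linarith
  -- norm estimates
  have hvz : ‖v‖ ≤ K * ‖z‖ := by
    calc ‖v‖ ≤ ‖C'‖ * ‖D z‖ := (C'.le_opNorm _)
    _ ≤ ‖C'‖ * (‖D‖ * ‖z‖) := by
        exact mul_le_mul_of_nonneg_left (D.le_opNorm z) (norm_nonneg _)
    _ = K * ‖z‖ := by rw [hK]; ring
  have hy2 : ‖y‖ ^ 2 ≤ 2 * ‖w‖ ^ 2 + 2 * K ^ 2 * ‖z‖ ^ 2 := by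
    have : ‖y‖ ≤ ‖w‖ + K * ‖z‖ := by
      calc ‖y‖ = ‖w - v‖ := by rw [hw]; congr 1; abel
      _ ≤ ‖w‖ + ‖v‖ := norm_sub_le _ _
      _ ≤ ‖w‖ + K * ‖z‖ := by linarith
    nlinarith [sq_nonneg (‖w‖ - K * ‖z‖), mul_self_le_mul_self (norm_nonneg y) this, sq_nonneg ‖z‖, sq_nonneg ‖w‖]
  refine le_trans ?_ key
  set ε := min ε₁ ε₂ / (2 * K ^ 2 + 2) with hε
  have hεpos : 0 < ε := by apply div_pos (lt_min hε₁ hε₂); nlinarith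
  have h2ε : 2 * ε ≤ ε₁ := by
    have : 2 * ε = min ε₁ ε₂ / (K ^ 2 + 1) := by rw [hε]; field_simp
    rw [this]
    calc min ε₁ ε₂ / (K ^ 2 + 1) ≤ min ε₁ ε₂ / 1 := by
          apply div_le_div_of_nonneg_left (le_min hε₁.le hε₂.le) one_pos; nlinarith
    _ = min ε₁ ε₂ := div_one _
    _ ≤ ε₁ := min_le_left _ _
  have hε2K : ε * (2 * K ^ 2 + 1) ≤ ε₂ := by
    have h1 : ε * (2 * K ^ 2 + 2) = min ε₁ ε₂ := by
      rw [hε]; field_simp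
    nlinarith [min_le_right ε₁ ε₂]
  have hεε₁ : ε ≤ ε₁ := by nlinarith
  nlinarith [sq_nonneg ‖x‖, sq_nonneg ‖w‖, sq_nonneg ‖z‖, sq_nonneg ‖y‖]
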